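/- Let k ≥ 2 and let β_1, …, β_k be complex numbers such that Re β_j < 0 and |Re β_j| > |Im β_j| for every j, and such that the multiset {β_1,…,β_k} is invariant under complex conjugation. Then the elementary symmetric values e_{k−1} and e_k of β_1,…,β_k are real, the numbers τ_{k−1} := (−1)^{k−1} e_{k−1} and τ_k := (−1)^k e_k are positive, and every β_m satisfies |β_m| ≥ τ_k/(√2 · τ_{k−1}). -/

import Mathlib

open Multiset in
lemma conj_esymm (s : Multiset ℂ) (n : ℕ) :
    (starRingEnd ℂ) (s.esymm n) = (s.map (starRingEnd ℂ)).esymm n := by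
  simp only [Multiset.esymm, Multiset.powersetCard_map, Multiset.map_map, map_multiset_sum,
    Multiset.map_map, Function.comp_def, map_multiset_prod]

open Multiset in
lemma prod_conj_inv (s : Multiset ℂ) (hs : s.map (starRingEnd ℂ) = s)
    (hpos : ∀ z ∈ s, 0 < z.re) : 0 < s.prod.re ∧ s.prod.im = 0 := by
  induction s using Multiset.strongInductionOn with
  | ih s ih =>
  rcases s.empty_or_exists_mem with rfl | ⟨z, hz⟩
  · simp
  have hzc : (starRingEnd ℂ) z ∈ s := by
    rw [← hs]; exact mem_map_of_mem _ hz
  by_cases him : z.im = 0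
  · obtain ⟨t, rfl⟩ := exists_cons_of_mem hz
    have hcz : (starRingEnd ℂ) z = z := Complex.conj_eq_iff_im.2 him
    have hts : t.map (starRingEnd ℂ) = t := by
      have := hs
      rwa [Multiset.map_cons, hcz, cons_inj_right] at this
    have := ih t (lt_cons_self _ _) hts (fun w hw => hpos w (mem_cons_of_mem hw))
    rw [prod_cons]
    constructor
    · simp only [Complex.mul_re, him, zero_mul, sub_zero]
      exact mul_pos (hpos z (mem_cons_self _ _)) this.1
    · simp [Complex.mul_im, him, this.2]
  · have hne : (starRingEnd ℂ) z ≠ z := fun h => him (by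
      have := congrArg Complex.im h
      simp [Complex.conj_im] at this
      linarith)
    have hzc' : (starRingEnd ℂ) z ∈ s.erase z := (mem_erase_of_ne hne).2 hzc
    obtain ⟨t, ht⟩ := exists_cons_of_mem hzc'
    have hsz : s = z ::ₘ (starRingEnd ℂ) z ::ₘ t := by rw [← ht, cons_erase hz]
    have hts : t.map (starRingEnd ℂ) = t := by
      have := hs
      rw [hsz, Multiset.map_cons, Multiset.map_cons, Complex.conj_conj,
        cons_swap] at this
      rwa [cons_inj_right, cons_inj_right] at this
    have hmem : ∀ w ∈ t, 0 < w.re := fun w hw => hpos w (by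
      rw [hsz]; exact mem_cons_of_mem (mem_cons_of_mem hw))
    have htlt : t < s := by
      rw [hsz]
      exact lt_of_lt_of_le (lt_cons_self _ _) (le_cons_self _ _ |>.trans (le_refl _)) |>.trans_le
        (le_refl _)
    have hI := ih t htlt hts hmem
    have hz0 : z ≠ 0 := fun h => by simp [h] at him
    have hnsq : 0 < Complex.normSq z := Complex.normSq_pos.2 hz0
    rw [hsz, prod_cons, prod_cons, ← mul_assoc, Complex.mul_conj]
    constructor
    · simpa [Complex.mul_re] using mul_pos hnsq hI.1
    · simp [Complex.mul_im, hI.2]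

theorem stmt3 (k : ℕ) (hk : 2 ≤ k) (β : Fin k → ℂ)
    (hre : ∀ j, (β j).re < 0) (hdom : ∀ j, |(β j).im| < |(β j).re|)
    (hconj : (Finset.univ.val.map β).map (starRingEnd ℂ) = Finset.univ.val.map β)
    (τ : ℕ → ℂ)
    (hτ : ∀ ℓ, τ ℓ = (-1 : ℂ) ^ ℓ * (Finset.univ.val.map β).esymm ℓ) :
    ((Finset.univ.val.map β).esymm (k - 1)).im = 0 ∧
    ((Finset.univ.val.map β).esymm k).im = 0 ∧
    0 < (τ (k - 1)).re ∧ 0 < (τ k).re ∧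
    ∀ m, (τ k).re / (Real.sqrt 2 * (τ (k - 1)).re) ≤ ‖β m‖ := by
  haveI : NeZero k := ⟨by omega⟩
  have hb0 : ∀ m, β m ≠ 0 := fun m h => by simpa [h] using hre m
  -- all esymm values are real
  have hreal : ∀ ℓ, ((Finset.univ.val.map β).esymm ℓ).im = 0 := fun ℓ => by
    have h := conj_esymm (Finset.univ.val.map β) ℓ
    rw [hconj] at h
    exact Complex.conj_eq_iff_im.1 h
  -- esymm k = product
  have hck : (Finset.univ : Finset (Fin k)).card = k := by simp
  have hek : (Finset.univ.val.map β).esymm k = ∏ j, β j := by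
    have hps := Finset.powersetCard_self (Finset.univ : Finset (Fin k))
    rw [hck] at hps
    rw [Finset.esymm_map_val, hps]
    simp
  -- product of negatives
  have hP : ∏ j, (-β j) = (-1 : ℂ) ^ k * ∏ j, β j := by
    have hcst : ((-1 : ℂ)) ^ k = ∏ _j : Fin k, (-1 : ℂ) := by rw [Finset.prod_const, hck]
    rw [hcst, ← Finset.prod_mul_distrib]
    simp
  -- positivity of the product of negatives
  have hs1 : Finset.univ.val.map (fun j => -β j) = (Finset.univ.val.map β).map Neg.neg := by
    rw [Multiset.map_map]; rfl
  have hs' : (Finset.univ.val.map (fun j => -β j)).map (starRingEnd ℂ)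
      = Finset.univ.val.map (fun j => -β j) := by
    rw [hs1, Multiset.map_map]
    have hcc : (starRingEnd ℂ) ∘ (Neg.neg : ℂ → ℂ) = Neg.neg ∘ (starRingEnd ℂ) := by
      ext z; simp
    rw [hcc, ← Multiset.map_map, hconj]
  have hpos' : ∀ z ∈ Finset.univ.val.map (fun j => -β j), 0 < z.re := by
    intro z hz
    obtain ⟨j, _, rfl⟩ := Multiset.mem_map.1 hz
    simp only [Complex.neg_re]
    linarith [hre j]
  have hPP := prod_conj_inv _ hs' hpos'
  have hprodeq : (Finset.univ.val.map (fun j => -β j)).prod = ∏ j, (-β j) := rfl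
  rw [hprodeq] at hPP
  -- τ k equals product of negatives
  have htk : τ k = ∏ j, (-β j) := by rw [hτ, hek, hP]
  -- esymm (k-1) as a sum
  have himg : Finset.powersetCard (k - 1) (Finset.univ : Finset (Fin k))
      = Finset.univ.image (fun m => ({m}ᶜ : Finset (Fin k))) := by
    ext t
    simp only [Finset.mem_powersetCard_univ, Finset.mem_image, Finset.mem_univ, true_and]
    constructor
    · intro ht
      have hc : tᶜ.card = 1 := by
        rw [Finset.card_compl, ht]
        simp only [Fintype.card_fin]
        omega
      obtain ⟨m, hm⟩ := Finset.card_eq_one.1 hc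
      exact ⟨m, by rw [← hm, compl_compl]⟩
    · rintro ⟨m, rfl⟩
      rw [Finset.card_compl, Finset.card_singleton, Fintype.card_fin]
  have hek1 : (Finset.univ.val.map β).esymm (k - 1)
      = ∑ m : Fin k, ∏ i ∈ ({m}ᶜ : Finset (Fin k)), β i := by
    rw [Finset.esymm_map_val, himg,
      Finset.sum_image (fun a _ b _ h => Finset.singleton_injective (compl_injective h))]
  have hprodc : ∀ m, ∏ i ∈ ({m}ᶜ : Finset (Fin k)), β i = (β m)⁻¹ * ∏ j, β j := by
    intro m
    rw [Finset.compl_singleton, eq_inv_mul_iff_mul_eq₀ (hb0 m),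
      Finset.mul_prod_erase _ _ (Finset.mem_univ m)]
  -- τ (k-1) formula
  have htau1 : τ (k - 1) = (∏ j, (-β j)) * ∑ m, (-β m)⁻¹ := by
    rw [hτ, hek1, Finset.mul_sum, Finset.mul_sum]
    apply Finset.sum_congr rfl
    intro m _
    rw [hprodc m, hP, inv_neg]
    have hk1 : (-1 : ℂ) ^ k = (-1) ^ (k - 1) * (-1) := by
      rw [← pow_succ]; congr 1; omega
    rw [hk1]; ring
  -- real part positivity of the inverse sum
  have hinvpos : ∀ m : Fin k, 0 < ((-β m)⁻¹).re := by
    intro m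
    rw [Complex.inv_re]
    apply div_pos
    · simp only [Complex.neg_re]; linarith [hre m]
    · exact Complex.normSq_pos.2 (neg_ne_zero.2 (hb0 m))
  have hσpos : 0 < (∑ m, (-β m)⁻¹).re := by
    rw [Complex.re_sum]
    exact Finset.sum_pos (fun m _ => hinvpos m) Finset.univ_nonempty
  have htk1re : (τ (k - 1)).re = (∏ j, (-β j)).re * (∑ m, (-β m)⁻¹).re := by
    rw [htau1, Complex.mul_re, hPP.2, zero_mul, sub_zero]
  have htkre : (τ k).re = (∏ j, (-β j)).re := by rw [htk]
  refine ⟨hreal _, hreal _, ?_, ?_, ?_⟩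
  · rw [htk1re]; exact mul_pos hPP.1 hσpos
  · rw [htkre]; exact hPP.1
  · intro m
    set p := (∏ j, (-β j)).re with hp
    set σ := (∑ m, (-β m)⁻¹).re with hσ
    set a := ‖β m‖ with ha
    set r := -(β m).re with hr
    have hppos : 0 < p := hPP.1
    have hapos : 0 < a := norm_pos_iff.2 (hb0 m)
    have hrpos : 0 < r := by simp only [hr]; linarith [hre m]
    have hsqrt2 : (0:ℝ) < Real.sqrt 2 := Real.sqrt_pos.2 (by norm_num)
    -- σ ≥ r / a^2
    have hterm : ((-β m)⁻¹).re = r / a ^ 2 := by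
      rw [Complex.inv_re, Complex.normSq_neg, ← Complex.sq_norm]
      simp [hr, ha]
    have hle : r / a ^ 2 ≤ σ := by
      rw [hσ, Complex.re_sum, ← hterm]
      exact Finset.single_le_sum (fun i _ => (hinvpos i).le) (Finset.mem_univ m)
    have hle' : r ≤ σ * a ^ 2 := by
      rw [div_le_iff₀ (by positivity)] at hle; linarith
    -- a ≤ √2 * r
    have ha2 : a ^ 2 ≤ 2 * r ^ 2 := by
      rw [Complex.sq_norm, Complex.normSq_apply]
      have h1 := hdom m
      have h2 : (β m).im ^ 2 ≤ (β m).re ^ 2 := by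
        have := sq_le_sq' (neg_le_of_abs_le h1.le) (le_of_abs_le h1.le)
        calc (β m).im ^ 2 ≤ |(β m).re| ^ 2 := this
          _ = (β m).re ^ 2 := sq_abs _
      simp only [hr]; nlinarith
    have har : a ≤ Real.sqrt 2 * r := by
      have : a = Real.sqrt (a ^ 2) := (Real.sqrt_sq hapos.le).symm
      rw [this]
      calc Real.sqrt (a ^ 2) ≤ Real.sqrt (2 * r ^ 2) := Real.sqrt_le_sqrt ha2
        _ = Real.sqrt 2 * r := by
          rw [Real.sqrt_mul (by norm_num), Real.sqrt_sq hrpos.le]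
    -- conclude
    rw [htkre, htk1re, div_le_iff₀ (mul_pos hsqrt2 (mul_pos hppos hσpos))]
    have hkey : 1 ≤ a * (Real.sqrt 2 * σ) := by
      have h4 : a ≤ Real.sqrt 2 * σ * a ^ 2 := by nlinarith
      nlinarith
    nlinarith [mul_le_mul_of_nonneg_left hkey hppos.le]
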